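/- Let P be a well-behaved transition probability space having the two-sphere property. Let Q ⊆ P be an orthoclosed subset with a finite basis of cardinality n, and let ρ ∈ P with ρ ∉ Q. Then the orthoclosed set ({ρ} ∪ Q)^⊥⊥ has a basis of cardinality n+1, and the covering property holds: every orthoclosed S with Q ⊆ S ⊆ ({ρ} ∪ Q)^⊥⊥ satisfies S = Q or S = ({ρ} ∪ Q)^⊥⊥. -/

import Mathlib

structure TPSpace (P : Type*) where
  p : P → P → ℝ
  nonneg : ∀ ρ σ, 0 ≤ p ρ σ
  le_one : ∀ ρ σ, p ρ σ ≤ 1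
  eq_one_iff : ∀ ρ σ, p ρ σ = 1 ↔ ρ = σ
  zero_iff : ∀ ρ σ, p ρ σ = 0 ↔ p σ ρ = 0

namespace TPSpace

variable {P : Type*} (T : TPSpace P)

/-- A subset is orthogonal if `p` vanishes on all pairs of distinct points of it. -/
def IsOrthoSet (S : Set P) : Prop :=
  ∀ ρ ∈ S, ∀ σ ∈ S, ρ ≠ σ → T.p ρ σ = 0

/-- The orthoplement of a subset. -/
def orthC (Q : Set P) : Set P := {σ | ∀ ρ ∈ Q, T.p ρ σ = 0}

/-- A subset is orthoclosed if it equals its double orthoplement. -/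
def IsOrthoclosed (Q : Set P) : Prop := T.orthC (T.orthC Q) = Q

/-- `B` is a basis of `Q`: it is an orthogonal subset of `Q`, and for every `σ ∈ Q`
the supremum of the finite partial sums `∑_{ρ ∈ B} p ρ σ` equals `1`. -/
def IsBasisOf (B Q : Set P) : Prop :=
  B ⊆ Q ∧ T.IsOrthoSet B ∧
    ∀ σ ∈ Q, IsLUB {s : ℝ | ∃ F : Finset P, ↑F ⊆ B ∧ s = ∑ ρ ∈ F, T.p ρ σ} 1

/-- `S` is a maximal orthogonal subset of `Q`. -/
def MaximalOrthoIn (Q S : Set P) : Prop :=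
  S ⊆ Q ∧ T.IsOrthoSet S ∧ ∀ S', S ⊆ S' → S' ⊆ Q → T.IsOrthoSet S' → S' = S

/-- A transition probability space is well-behaved if it is symmetric and every maximal
orthogonal subset of an orthoclosed subset is a basis of it. -/
def WellBehaved : Prop :=
  (∀ ρ σ, T.p ρ σ = T.p σ ρ) ∧
    ∀ Q, T.IsOrthoclosed Q → ∀ S, T.MaximalOrthoIn Q S → T.IsBasisOf S Q

/-- The equivalence relation generated by `p ρ σ ≠ 0`. -/
def SameSector : P → P → Prop := Relation.EqvGen fun ρ σ => T.p ρ σ ≠ 0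

/-- A sector is an equivalence class of `SameSector`. -/
def IsSector (C : Set P) : Prop := ∃ ρ, C = {σ | T.SameSector ρ σ}

/-- The two-sphere property: for any two distinct equivalent points `ρ, σ`, the set
`{ρ,σ}^⊥⊥` is in bijection with the unit two-sphere in `ℝ³`, in a way turning the
transition probabilities into `p(z,w) = (1 + ⟨z,w⟩)/2`. -/
def TwoSphereProperty : Prop :=
  ∀ ρ σ : P, ρ ≠ σ → T.SameSector ρ σ →
    ∃ f : P → EuclideanSpace ℝ (Fin 3),
      Set.BijOn f (T.orthC (T.orthC {ρ, σ})) (Metric.sphere 0 1) ∧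
      ∀ ρ' ∈ T.orthC (T.orthC {ρ, σ}), ∀ σ' ∈ T.orthC (T.orthC {ρ, σ}),
        T.p ρ' σ' = (1 + (inner ℝ (f ρ') (f σ') : ℝ)) / 2

end TPSpace

namespace TPSpace

variable {P : Type*} (T : TPSpace P)

lemma p_self (x : P) : T.p x x = 1 := (T.eq_one_iff x x).2 rfl

lemma isOrthoSet_mono {X Y : Set P} (h : X ⊆ Y) (hY : T.IsOrthoSet Y) : T.IsOrthoSet X :=
  fun a ha c hc hne => hY a (h ha) c (h hc) hne

lemma subset_orthC_orthC (X : Set P) : X ⊆ T.orthC (T.orthC X) := by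
  intro x hx w hw
  exact (T.zero_iff x w).1 (hw x hx) ▸ (T.zero_iff x w).1 (hw x hx)

lemma orthC_anti {X Y : Set P} (h : X ⊆ Y) : T.orthC Y ⊆ T.orthC X :=
  fun w hw x hx => hw x (h hx)

lemma orthC_orthC_orthC (X : Set P) : T.orthC (T.orthC (T.orthC X)) = T.orthC X :=
  Set.Subset.antisymm (T.orthC_anti (T.subset_orthC_orthC X)) (T.subset_orthC_orthC (T.orthC X))

lemma orthoclosed_orthC_orthC (X : Set P) : T.IsOrthoclosed (T.orthC (T.orthC X)) := by
  unfold IsOrthoclosed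
  rw [T.orthC_orthC_orthC (T.orthC X)]

lemma orthC_orthC_mono {X Y : Set P} (h : X ⊆ T.orthC (T.orthC Y)) :
    T.orthC (T.orthC X) ⊆ T.orthC (T.orthC Y) := by
  have h1 : T.orthC (T.orthC (T.orthC Y)) ⊆ T.orthC X := T.orthC_anti h
  rw [T.orthC_orthC_orthC Y] at h1
  exact T.orthC_anti h1

lemma orthC_orthC_subset {X Y : Set P} (h : X ⊆ Y) :
    T.orthC (T.orthC X) ⊆ T.orthC (T.orthC Y) :=
  T.orthC_anti (T.orthC_anti h)

lemma orthoclosed_univ : T.IsOrthoclosed (Set.univ : Set P) := by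
  have h : T.orthC (Set.univ : Set P) = ∅ := by
    refine Set.eq_empty_iff_forall_notMem.2 fun w hw => ?_
    have := hw w (Set.mem_univ w)
    rw [T.p_self w] at this
    norm_num at this
  unfold IsOrthoclosed
  rw [h]
  ext x
  simp [orthC]

lemma exists_maximal {O C : Set P} (hOC : O ⊆ C) (hO : T.IsOrthoSet O) :
    ∃ M, O ⊆ M ∧ T.MaximalOrthoIn C M := by
  obtain ⟨m, hm, hmax⟩ := zorn_subset_nonempty {S : Set P | S ⊆ C ∧ T.IsOrthoSet S}
    (fun c hc hchain hcne => by
      refine ⟨⋃₀ c, ⟨?_, ?_⟩, fun s hs => Set.subset_sUnion_of_mem hs⟩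
      · exact Set.sUnion_subset fun s hs => (hc hs).1
      · intro a ha b hb hne
        obtain ⟨s, hs, has⟩ := ha
        obtain ⟨t, ht, hbt⟩ := hb
        rcases hchain.total hs ht with h | h
        · exact (hc ht).2 a (h has) b hbt hne
        · exact (hc hs).2 a has b (h hbt) hne) O ⟨hOC, hO⟩
  exact ⟨m, hm, hmax.1.1, hmax.1.2, fun S' h1 h2 h3 =>
    Set.Subset.antisymm (hmax.2 ⟨h2, h3⟩ h1) h1⟩

lemma sum_le_one (hwb : T.WellBehaved) (F : Finset P) (hF : T.IsOrthoSet ↑F) (σ : P) :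
    ∑ x ∈ F, T.p x σ ≤ 1 := by
  obtain ⟨M, hFM, hmax⟩ := T.exists_maximal (Set.subset_univ (↑F : Set P)) hF
  have hbasis := hwb.2 Set.univ T.orthoclosed_univ M hmax
  have hlub := hbasis.2.2 σ (Set.mem_univ σ)
  exact hlub.1 ⟨F, hFM, rfl⟩

lemma basis_sum_eq_one (M : Finset P) {C : Set P} (hM : T.IsBasisOf ↑M C) {σ : P}
    (hσ : σ ∈ C) : ∑ x ∈ M, T.p x σ = 1 := by
  have hlub := hM.2.2 σ hσ
  have h1 : ∑ x ∈ M, T.p x σ ≤ 1 := hlub.1 ⟨M, subset_rfl, rfl⟩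
  have h2 : 1 ≤ ∑ x ∈ M, T.p x σ := by
    apply hlub.2
    rintro s ⟨F, hFM, rfl⟩
    exact Finset.sum_le_sum_of_subset_of_nonneg (by exact_mod_cast hFM)
      (fun i _ _ => T.nonneg i σ)
  linarith

lemma basis_orthC_eq (hwb : T.WellBehaved) (M : Finset P) {C : Set P}
    (hM : T.IsBasisOf ↑M C) (hC : T.IsOrthoclosed C) :
    T.orthC ↑M = T.orthC C ∧ C = T.orthC (T.orthC ↑M) := by
  have key : T.orthC ↑M = T.orthC C := by
    apply Set.Subset.antisymm
    · intro w hw σ hσ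
      have hwM : w ∉ (↑M : Set P) := fun hmem => by
        simpa [T.p_self w] using hw w hmem
      classical
      have hortho : T.IsOrthoSet ↑(insert w M) := by
        intro a ha c hc hne
        simp only [Finset.coe_insert, Set.mem_insert_iff] at ha hc
        rcases ha with rfl | ha
        · rcases hc with rfl | hc
          · exact absurd rfl hne
          · exact (T.zero_iff c a).1 (hw c hc)
        · rcases hc with rfl | hc
          · exact hw a ha
          · exact hM.2.1 a ha c hc hne
      have hle := T.sum_le_one hwb (insert w M) hortho σ
      rw [Finset.sum_insert (by simpa using hwM)] at hle
      rw [T.basis_sum_eq_one M hM hσ] at hle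
      have := T.nonneg w σ
      have hzero : T.p w σ = 0 := by linarith
      exact (T.zero_iff σ w).2 hzero
    · exact T.orthC_anti hM.1
  exact ⟨key, by conv_lhs => rw [← hC, ← key]⟩

lemma ortho_isBasis (hwb : T.WellBehaved) {X : Set P} (hX : T.IsOrthoSet X) :
    T.IsBasisOf X (T.orthC (T.orthC X)) := by
  apply hwb.2 _ (T.orthoclosed_orthC_orthC X)
  refine ⟨T.subset_orthC_orthC X, hX, fun S' h1 h2 h3 => ?_⟩
  apply Set.Subset.antisymm _ h1
  intro u hu
  by_contra huX
  have huorth : u ∈ T.orthC X := fun x hx => h3 x (h1 hx) u hu (fun h => huX (h ▸ hx))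
  have := h2 hu u huorth
  simp [T.p_self u] at this

lemma card_le (hwb : T.WellBehaved) (Z Y : Finset P) (hZ : T.IsOrthoSet ↑Z)
    (hY : T.IsOrthoSet ↑Y) (hYZ : ↑Y ⊆ T.orthC (T.orthC ↑Z)) : Y.card ≤ Z.card := by
  have hZb := T.ortho_isBasis hwb hZ
  have key : (Y.card : ℝ) ≤ (Z.card : ℝ) := by
    calc (Y.card : ℝ) = ∑ y ∈ Y, (1 : ℝ) := by simp
    _ = ∑ y ∈ Y, ∑ z ∈ Z, T.p z y := by
        refine Finset.sum_congr rfl fun y hy => ?_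
        exact (T.basis_sum_eq_one Z hZb (hYZ hy)).symm
    _ = ∑ z ∈ Z, ∑ y ∈ Y, T.p z y := Finset.sum_comm
    _ ≤ ∑ z ∈ Z, (1 : ℝ) := by
        refine Finset.sum_le_sum fun z _ => ?_
        have : ∑ y ∈ Y, T.p y z ≤ 1 := T.sum_le_one hwb Y hY z
        calc ∑ y ∈ Y, T.p z y = ∑ y ∈ Y, T.p y z :=
          Finset.sum_congr rfl fun y _ => hwb.1 z y
        _ ≤ 1 := this
    _ = (Z.card : ℝ) := by simp
  exact_mod_cast key

end TPSpace

namespace TPSpace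

variable {P : Type*} (T : TPSpace P)

lemma antipode (hwb : T.WellBehaved) (h2s : T.TwoSphereProperty) {x y : P}
    (hxy : x ≠ y) (hp : T.p x y ≠ 0) {z : P} (hz : z ∈ T.orthC (T.orthC {x, y})) :
    ∃ z', z' ∈ T.orthC (T.orthC {x, y}) ∧ T.p z z' = 0 ∧
      T.orthC (T.orthC {z, z'}) = T.orthC (T.orthC {x, y}) := by
  obtain ⟨f, hbij, hform⟩ := h2s x y hxy (Relation.EqvGen.rel x y hp)
  set S := T.orthC (T.orthC ({x, y} : Set P)) with hS
  have hfz : ‖f z‖ = 1 := mem_sphere_zero_iff_norm.1 (hbij.1 hz)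
  have hneg : -f z ∈ Metric.sphere (0 : EuclideanSpace ℝ (Fin 3)) 1 := by
    rw [mem_sphere_zero_iff_norm, norm_neg, hfz]
  obtain ⟨z', hz'S, hfz'⟩ := hbij.2.2 hneg
  have hinner : (inner ℝ (f z) (f z') : ℝ) = -1 := by
    rw [hfz']
    rw [inner_neg_right, real_inner_self_eq_norm_sq, hfz]
    norm_num
  have hpzz' : T.p z z' = 0 := by
    rw [hform z hz z' hz'S, hinner]
    norm_num
  have hzz' : z ≠ z' := by
    intro h
    rw [← h, T.p_self z] at hpzz'
    norm_num at hpzz'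
  -- {z, z'} is an orthogonal set
  have hortho : T.IsOrthoSet ({z, z'} : Set P) := by
    have hpz'z := (T.zero_iff z z').1 hpzz'
    intro a ha c hc hne
    rcases ha with rfl | ha
    · rcases hc with rfl | hc
      · exact absurd rfl hne
      · rw [Set.mem_singleton_iff] at hc; rw [hc]; exact hpzz'
    · rw [Set.mem_singleton_iff] at ha
      rcases hc with rfl | hc
      · rw [ha]; exact hpz'z
      · rw [Set.mem_singleton_iff] at hc
        rw [ha, hc] at hne; exact absurd rfl hne
  -- {z, z'} is maximal orthogonal in S
  have hmax : T.MaximalOrthoIn S {z, z'} := by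
    refine ⟨?_, hortho, ?_⟩
    · intro a ha
      rcases ha with rfl | ha
      · exact hz
      · rw [Set.mem_singleton_iff] at ha; subst ha; exact hz'S
    · intro S' h1 h2 h3
      refine Set.Subset.antisymm ?_ h1
      intro u hu
      by_contra huzz
      have huz : u ≠ z := fun h => huzz (h ▸ Set.mem_insert z {z'})
      have huz' : u ≠ z' := fun h => huzz (h ▸ Set.mem_insert_of_mem z rfl)
      have h1' : T.p u z = 0 := h3 u hu z (h1 (Set.mem_insert z {z'})) huz
      have h2' : T.p u z' = 0 := h3 u hu z' (h1 (Set.mem_insert_of_mem z rfl)) huz'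
      have huS : u ∈ S := h2 hu
      have e1 : (inner ℝ (f u) (f z) : ℝ) = -1 := by
        have := hform u huS z hz
        rw [h1'] at this
        linarith [this.symm]
      have e2 : (inner ℝ (f u) (f z') : ℝ) = -1 := by
        have := hform u huS z' hz'S
        rw [h2'] at this
        linarith [this.symm]
      rw [hfz', inner_neg_right, e1] at e2
      norm_num at e2
  have hbasis := hwb.2 S (T.orthoclosed_orthC_orthC _) _ hmax
  classical
  have hcoe : (↑({z, z'} : Finset P) : Set P) = ({z, z'} : Set P) := by simp
  have hbasis' : T.IsBasisOf ↑({z, z'} : Finset P) S := by rw [hcoe]; exact hbasis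
  have := T.basis_orthC_eq hwb ({z, z'} : Finset P) hbasis' (T.orthoclosed_orthC_orthC _)
  refine ⟨z', hz'S, hpzz', ?_⟩
  rw [← hcoe]
  exact this.2.symm

lemma gram_schmidt [DecidableEq P] (hwb : T.WellBehaved) (h2s : T.TwoSphereProperty)
    (B : Finset P) (hB : T.IsOrthoSet ↑B) (ρ₀ : P) :
    ρ₀ ∈ T.orthC (T.orthC ↑B) ∨
      ∃ τ, τ ∉ B ∧ (∀ b ∈ B, T.p b τ = 0) ∧
        ρ₀ ∈ T.orthC (T.orthC ↑(insert τ B)) := by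
  induction B using Finset.induction_on with
  | empty =>
      right
      refine ⟨ρ₀, by simp, by simp, ?_⟩
      have : (↑(insert ρ₀ (∅ : Finset P)) : Set P) = {ρ₀} := by simp
      rw [this]
      exact T.subset_orthC_orthC _ rfl
  | insert _ _ hbB₀ =>
      rename_i b B₀ IH
      have hB₀ : T.IsOrthoSet ↑B₀ :=
        T.isOrthoSet_mono (by simp [Finset.coe_insert, Set.subset_insert]) hB
      rcases IH hB₀ with hleft | ⟨τ₀, hτ₀B₀, hτ₀orth, hρ₀⟩
      · left
        exact T.orthC_orthC_subset (by simp [Finset.coe_insert, Set.subset_insert]) hleft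
      · by_cases hpb : T.p τ₀ b = 0
        · right
          refine ⟨τ₀, ?_, ?_, ?_⟩
          · simp only [Finset.mem_insert, not_or]
            refine ⟨fun h => ?_, hτ₀B₀⟩
            rw [h, T.p_self b] at hpb; norm_num at hpb
          · intro b' hb'
            rcases Finset.mem_insert.1 hb' with rfl | hb'
            · exact (T.zero_iff τ₀ b').1 hpb
            · exact hτ₀orth b' hb'
          · refine T.orthC_orthC_subset ?_ hρ₀
            intro u hu
            simp only [Finset.coe_insert, Set.mem_insert_iff] at hu ⊢
            tauto
        · by_cases hτ₀b : τ₀ = b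
          · left
            subst hτ₀b
            exact T.orthC_orthC_subset (by
              intro u hu
              simp only [Finset.coe_insert, Set.mem_insert_iff] at hu ⊢
              tauto) hρ₀
          · -- sphere step
            have hzS : b ∈ T.orthC (T.orthC ({τ₀, b} : Set P)) :=
              T.subset_orthC_orthC _ (Set.mem_insert_of_mem τ₀ rfl)
            obtain ⟨τ, hτS, hpbτ, hSeq⟩ := T.antipode hwb h2s hτ₀b hpb hzS
            right
            have hτb : τ ≠ b := by
              intro h
              rw [h, T.p_self b] at hpbτ; norm_num at hpbτ
            have hτB₀orth : ∀ b' ∈ B₀, T.p b' τ = 0 := by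
              intro b' hb'
              have hb'mem : b' ∈ T.orthC ({τ₀, b} : Set P) := by
                intro u hu
                rcases hu with rfl | hu
                · exact (T.zero_iff u b').2 (hτ₀orth b' hb')
                · rw [Set.mem_singleton_iff] at hu; subst hu
                  exact hB u (by simp) b' (by simp [hb']) (fun h => hbB₀ (h ▸ hb'))
              exact hτS b' hb'mem
            have hτnotB₀ : τ ∉ B₀ := fun h => by
              have := hτB₀orth τ h
              rw [T.p_self τ] at this; norm_num at this
            refine ⟨τ, by simp [hτb, hτnotB₀], ?_, ?_⟩
            · intro b' hb'
              rcases Finset.mem_insert.1 hb' with rfl | hb'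
              · exact hpbτ
              · exact hτB₀orth b' hb'
            · -- ρ₀ ∈ (insert τ (insert b B₀))^⊥⊥
              have hsub : (↑(insert τ₀ B₀) : Set P) ⊆
                  T.orthC (T.orthC ↑(insert τ (insert b B₀))) := by
                intro u hu
                simp only [Finset.coe_insert, Set.mem_insert_iff] at hu
                rcases hu with rfl | hu
                · -- u = τ₀ ∈ {b, τ}^⊥⊥ = {τ₀,b}^⊥⊥
                  have hu1 : u ∈ T.orthC (T.orthC ({u, b} : Set P)) :=
                    T.subset_orthC_orthC _ (Set.mem_insert u {b})
                  rw [← hSeq] at hu1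
                  refine T.orthC_orthC_mono ?_ hu1
                  intro v hv
                  apply T.subset_orthC_orthC
                  simp only [Finset.coe_insert, Set.mem_insert_iff]
                  rcases hv with rfl | hv
                  · right; left; rfl
                  · rw [Set.mem_singleton_iff] at hv; subst hv; left; rfl
                · apply T.subset_orthC_orthC
                  simp only [Finset.coe_insert, Set.mem_insert_iff]
                  right; right; exact hu
              exact T.orthC_orthC_mono hsub hρ₀

end TPSpace

/-- In a well-behaved transition probability space with the two-sphere property, if `Q`
is orthoclosed with a basis of cardinality `n` and `ρ ∉ Q`, then `({ρ} ∪ Q)^⊥⊥` has a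
basis of cardinality `n + 1`, and the covering property holds: any orthoclosed `S` with
`Q ⊆ S ⊆ ({ρ} ∪ Q)^⊥⊥` equals `Q` or `({ρ} ∪ Q)^⊥⊥`. -/
theorem covering_property {P : Type*} (T : TPSpace P)
    (hwb : T.WellBehaved) (h2s : T.TwoSphereProperty)
    (Q : Set P) (hQ : T.IsOrthoclosed Q)
    (n : ℕ) (B : Finset P) (hB : T.IsBasisOf ↑B Q) (hBn : B.card = n)
    (ρ : P) (hρ : ρ ∉ Q) :
    (∃ B' : Finset P, T.IsBasisOf ↑B' (T.orthC (T.orthC ({ρ} ∪ Q))) ∧ B'.card = n + 1) ∧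
    ∀ S : Set P, T.IsOrthoclosed S → Q ⊆ S → S ⊆ T.orthC (T.orthC ({ρ} ∪ Q)) →
      S = Q ∨ S = T.orthC (T.orthC ({ρ} ∪ Q)) := by
  letI : DecidableEq P := Classical.decEq P
  set R := T.orthC (T.orthC ({ρ} ∪ Q)) with hRdef
  have hRclosed : T.IsOrthoclosed R := T.orthoclosed_orthC_orthC _
  have hρR : ρ ∈ R := T.subset_orthC_orthC _ (Or.inl rfl)
  have hQR : Q ⊆ R := fun q hq => T.subset_orthC_orthC _ (Or.inr hq)
  have hQ1 : Q = T.orthC (T.orthC ↑B) := (T.basis_orthC_eq hwb B hB hQ).2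
  have hQ2 : T.orthC ↑B = T.orthC Q := (T.basis_orthC_eq hwb B hB hQ).1
  rcases T.gram_schmidt hwb h2s B hB.2.1 ρ with hcase | ⟨τ', hτ'B, hτ'orth, hρZ⟩
  · rw [← hQ1] at hcase; exact absurd hcase hρ
  set Z : Finset P := insert τ' B with hZdef
  have hZortho : T.IsOrthoSet ↑Z := by
    intro a ha c hc hne
    simp only [hZdef, Finset.coe_insert, Set.mem_insert_iff, Finset.mem_coe] at ha hc
    rcases ha with rfl | ha
    · rcases hc with rfl | hc
      · exact absurd rfl hne
      · exact (T.zero_iff c a).1 (hτ'orth c hc)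
    · rcases hc with rfl | hc
      · exact hτ'orth a ha
      · exact hB.2.1 a ha c hc hne
  have hBZ : (↑B : Set P) ⊆ ↑Z := by
    rw [hZdef]; intro b hb; simp only [Finset.coe_insert, Set.mem_insert_iff]; right; exact hb
  have hQZ : Q ⊆ T.orthC (T.orthC ↑Z) := by
    rw [hQ1]; exact T.orthC_orthC_subset hBZ
  have hRZ : R ⊆ T.orthC (T.orthC ↑Z) := by
    apply T.orthC_orthC_mono
    intro u hu
    rcases hu with hu | hu
    · rw [Set.mem_singleton_iff] at hu; rw [hu]; exact hρZ
    · exact hQZ hu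
  have hZcard : Z.card = n + 1 := by
    rw [hZdef, Finset.card_insert_of_notMem hτ'B, hBn]
  have hBR : (↑B : Set P) ⊆ R := fun b hb => hQR (hB.1 hb)
  obtain ⟨M, hBM, hMmax⟩ := T.exists_maximal hBR hB.2.1
  have hMbasis : T.IsBasisOf M R := hwb.2 R hRclosed M hMmax
  have hMfin : M.Finite := by
    by_contra hinf
    obtain ⟨Y, hYM, hYcard⟩ := Set.Infinite.exists_subset_card_eq hinf (n + 2)
    have hle : Y.card ≤ Z.card := T.card_le hwb Z Y hZortho
      (T.isOrthoSet_mono hYM hMmax.2.1) (fun y hy => hRZ (hMmax.1 (hYM hy)))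
    omega
  set Mf := hMfin.toFinset with hMfdef
  have hMfcoe : (↑Mf : Set P) = M := hMfin.coe_toFinset
  have hMfcard : Mf.card ≤ n + 1 := by
    have hle : Mf.card ≤ Z.card := T.card_le hwb Z Mf hZortho
      (by rw [hMfcoe]; exact hMmax.2.1) (by rw [hMfcoe]; exact fun m hm => hRZ (hMmax.1 hm))
    omega
  have hBMf : B ⊆ Mf := fun b hb => by
    rw [← Finset.mem_coe, hMfcoe]; exact hBM (by exact_mod_cast hb)
  have hBneM : (↑B : Set P) ≠ M := by
    intro h
    have hBbasisR : T.IsBasisOf ↑B R := by rw [h]; exact hMbasis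
    have hRQ : R = Q := by
      rw [(T.basis_orthC_eq hwb B hBbasisR hRclosed).2, ← hQ1]
    exact hρ (hRQ ▸ hρR)
  have hBneMf : B ≠ Mf := fun h => hBneM (by rw [h, hMfcoe])
  have hcard_lt : n < Mf.card := by
    rw [← hBn]
    exact Finset.card_lt_card (HasSubset.Subset.ssubset_of_ne hBMf hBneMf)
  have hMfcard' : Mf.card = n + 1 := by omega
  have hsdcard : (Mf \ B).card = 1 := by
    rw [Finset.card_sdiff_of_subset hBMf, hMfcard', hBn]
    omega
  obtain ⟨τ, hτeq⟩ := Finset.card_eq_one.1 hsdcard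
  have hτmem := Finset.mem_sdiff.1 (hτeq ▸ Finset.mem_singleton_self τ)
  have hτMf : τ ∈ Mf := hτmem.1
  have hτB : τ ∉ B := hτmem.2
  have hMfeq : Mf = insert τ B := by
    apply Finset.Subset.antisymm
    · intro x hx
      by_cases hxB : x ∈ B
      · exact Finset.mem_insert_of_mem hxB
      · have hxs : x ∈ Mf \ B := Finset.mem_sdiff.2 ⟨hx, hxB⟩
        rw [hτeq] at hxs
        exact Finset.mem_insert.2 (Or.inl (Finset.mem_singleton.1 hxs))
    · intro x hx
      rcases Finset.mem_insert.1 hx with rfl | hx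
      · exact hτMf
      · exact hBMf hx
  have hMeq : M = ↑(insert τ B) := by rw [← hMfeq, hMfcoe]
  have hMbasis' : T.IsBasisOf ↑(insert τ B) R := by rw [← hMeq]; exact hMbasis
  refine ⟨⟨insert τ B, hMbasis', by rw [Finset.card_insert_of_notMem hτB, hBn]⟩, ?_⟩
  have hN : ∀ σ, σ ∈ T.orthC Q → σ ∈ R → σ = τ := by
    intro σ hσQ hσR
    have hsum := T.basis_sum_eq_one (insert τ B) hMbasis' hσR
    rw [Finset.sum_insert hτB] at hsum
    have hzero : ∑ b ∈ B, T.p b σ = 0 :=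
      Finset.sum_eq_zero fun b hb => hσQ b (hB.1 (by exact_mod_cast hb))
    rw [hzero] at hsum
    have hone : T.p τ σ = 1 := by linarith
    exact ((T.eq_one_iff τ σ).1 hone).symm
  intro S hS hQS hSR
  have hBS : (↑B : Set P) ⊆ S := fun b hb => hQS (hB.1 hb)
  obtain ⟨MS, hBMS, hMSmax⟩ := T.exists_maximal hBS hB.2.1
  have hMSbasis := hwb.2 S hS MS hMSmax
  have hMSsub : ∀ z ∈ MS, z ∉ (↑B : Set P) → z = τ := by
    intro z hzMS hzB
    have hzQ : z ∈ T.orthC Q := by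
      rw [← hQ2]
      intro b hb
      exact hMSmax.2.1 b (hBMS hb) z hzMS (fun h => hzB (h ▸ hb))
    exact hN z hzQ (hSR (hMSmax.1 hzMS))
  by_cases hτMS : τ ∈ MS
  · right
    have hMSeq : MS = ↑(insert τ B) := by
      apply Set.Subset.antisymm
      · intro x hx
        simp only [Finset.coe_insert, Set.mem_insert_iff, Finset.mem_coe]
        by_cases hxB : x ∈ (↑B : Set P)
        · right; exact_mod_cast hxB
        · left; exact hMSsub x hx hxB
      · intro x hx
        simp only [Finset.coe_insert, Set.mem_insert_iff, Finset.mem_coe] at hx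
        rcases hx with rfl | hx
        · exact hτMS
        · exact hBMS (by exact_mod_cast hx)
    have h1 : S = T.orthC (T.orthC ↑(insert τ B)) := by
      have hb : T.IsBasisOf ↑(insert τ B) S := by rw [← hMSeq]; exact hMSbasis
      exact (T.basis_orthC_eq hwb _ hb hS).2
    have h2 : R = T.orthC (T.orthC ↑(insert τ B)) :=
      (T.basis_orthC_eq hwb _ hMbasis' hRclosed).2
    rw [h1, ← h2]
  · left
    have hMSeq : MS = ↑B := by
      apply Set.Subset.antisymm
      · intro x hx
        by_cases hxB : x ∈ (↑B : Set P)
        · exact hxB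
        · exact absurd (hMSsub x hx hxB ▸ hx) hτMS
      · exact hBMS
    have hb : T.IsBasisOf ↑B S := by rw [← hMSeq]; exact hMSbasis
    rw [(T.basis_orthC_eq hwb _ hb hS).2, ← hQ1]
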